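/- Theorem on three perpendiculars: let α be a plane in three-dimensional Euclidean space, let O and C be points of α, let B be any point, and let A be the orthogonal projection of B onto α. Then the vector B - O is orthogonal to the vector C - O if and only if the vector A - O is orthogonal to C - O; i.e. ⟪B - O, C - O⟫ = 0 ↔ ⟪A - O, C - O⟫ = 0. -/

import Mathlib

open EuclideanGeometry

/-- Theorem on three perpendiculars: let `α` be a plane in three-dimensional
Euclidean space, `O` and `C` points of `α`, `B` any point, and `A` the
orthogonal projection of `B` onto `α`.  Then `B - O` is orthogonal to `C - O`
if and only if `A - O` is orthogonal to `C - O`. -/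
theorem three_perpendiculars
    (α : AffineSubspace ℝ (EuclideanSpace ℝ (Fin 3))) [Nonempty α]
    (hα : Module.finrank ℝ α.direction = 2)
    (O C : EuclideanSpace ℝ (Fin 3)) (hO : O ∈ α) (hC : C ∈ α)
    (B : EuclideanSpace ℝ (Fin 3)) :
    inner ℝ (B - O) (C - O) = (0 : ℝ) ↔
      inner ℝ ((EuclideanGeometry.orthogonalProjection α B : EuclideanSpace ℝ (Fin 3)) - O)
        (C - O) = (0 : ℝ) := by
  set A := (EuclideanGeometry.orthogonalProjection α B : EuclideanSpace ℝ (Fin 3)) with hA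
  have hmem : C - O ∈ α.direction := AffineSubspace.vsub_mem_direction hC hO
  have hperp : inner ℝ (B - A) (C - O) = (0 : ℝ) := by
    have := EuclideanGeometry.vsub_orthogonalProjection_mem_direction_orthogonal α B
    have h0 := (Submodule.mem_orthogonal _ _).1 this _ hmem
    simpa [real_inner_comm, hA, mul_comm] using h0
  have key : inner ℝ (B - O) (C - O) = inner ℝ (A - O) (C - O) + (0 : ℝ) := by
    rw [← hperp, ← inner_add_left]
    congr 1
    abel
  rw [key]
  simp
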